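/- Every positive Horn formula is preserved by all surjective periomorphisms of a structure A: if h : A^per → A is a surjective homomorphism, φ(x̄) a positive Horn formula, and ā_0, ..., ā_{ℓ-1} ∈ A^per are periodic sequences with (ā_0(i), ..., ā_{ℓ-1}(i)) ∈ φ(A) for all i ∈ ℕ, then (h(ā_0), ..., h(ā_{ℓ-1})) ∈ φ(A). -/

import Mathlib

open FirstOrder FirstOrder.Language FirstOrder.Language.Structure Function

universe u v w

/-- Componentwise structure on a Pi type. -/
instance piStructure {L : Language} {ι : Type*} (M : ι → Type*)
    [∀ i, L.Structure (M i)] : L.Structure (∀ i, M i) where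
  funMap f x i := funMap f fun j => x j i
  RelMap r x := ∀ i, RelMap r fun j => x j i

/-- Componentwise structure on a binary product. -/
instance prodStructure {L : Language} {M N : Type*} [L.Structure M] [L.Structure N] :
    L.Structure (M × N) where
  funMap f x := (funMap f fun i => (x i).1, funMap f fun i => (x i).2)
  RelMap r x := RelMap r (fun i => (x i).1) ∧ RelMap r fun i => (x i).2

/-- `a : ℕ → A` is `k`-periodic: `k > 0` and `a i = a (i % k)` for all `i`. -/
def IsPeriodicWith {A : Type*} (a : ℕ → A) (k : ℕ) : Prop :=
  0 < k ∧ ∀ i, a i = a (i % k)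

/-- `a : ℕ → A` is periodic if it is `k`-periodic for some `k > 0`. -/
def IsPeriodic {A : Type*} (a : ℕ → A) : Prop :=
  ∃ k, IsPeriodicWith a k

theorem isPeriodicWith_of_dvd {A : Type*} {a : ℕ → A} {k m : ℕ}
    (h : IsPeriodicWith a k) (hm : 0 < m) (hd : k ∣ m) : IsPeriodicWith a m :=
  ⟨hm, fun i => by rw [h.2 i, h.2 (i % m), Nat.mod_mod_of_dvd i hd]⟩

/-- The set of periodic functions as a substructure of the direct power `A^ℕ`. -/
def periodicSubstructure (L : Language) (A : Type w) [L.Structure A] :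
    L.Substructure (ℕ → A) where
  carrier := {a | IsPeriodic a}
  fun_mem := by
    intro n f x hx
    choose k hk using hx
    refine ⟨∏ j, k j, Finset.prod_pos fun j _ => (hk j).1, fun i => ?_⟩
    show funMap f (fun j => x j i) = funMap f (fun j => x j (i % ∏ j, k j))
    congr 1
    funext j
    exact (isPeriodicWith_of_dvd (hk j) (Finset.prod_pos fun j _ => (hk j).1)
      (Finset.dvd_prod_of_mem k (Finset.mem_univ j))).2 i

/-- The `k`-periodic sequence `⟨x 0 ⋯ x (k-1)⟩`. -/
def perSeq {A : Type*} (k : ℕ) (hk : 0 < k) (x : Fin k → A) : ℕ → A :=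
  fun i => x ⟨i % k, Nat.mod_lt i hk⟩

theorem perSeq_mem {L : Language} {A : Type w} [L.Structure A]
    (k : ℕ) (hk : 0 < k) (x : Fin k → A) : perSeq k hk x ∈ periodicSubstructure L A :=
  ⟨k, hk, fun i => congrArg x (Fin.ext (Nat.mod_mod_of_dvd i dvd_rfl).symm)⟩

/-- The canonical embedding map `A^k → A^per` on elements. -/
def ekPer {L : Language} {A : Type w} [L.Structure A] (k : ℕ) (hk : 0 < k)
    (x : Fin k → A) : periodicSubstructure L A :=
  ⟨perSeq k hk x, perSeq_mem k hk x⟩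

/-- Positive Horn formulas: built from atomic formulas using `∧`, `∃`, `∀`. -/
inductive IsPositiveHorn {L : Language} {α : Type*} :
    ∀ {n : ℕ}, L.BoundedFormula α n → Prop
  | equal {n} (t₁ t₂ : L.Term (α ⊕ Fin n)) : IsPositiveHorn (t₁.bdEqual t₂)
  | rel {n ℓ} (R : L.Relations ℓ) (ts : Fin ℓ → L.Term (α ⊕ Fin n)) :
      IsPositiveHorn (R.boundedFormula ts)
  | inf {n} {φ ψ : L.BoundedFormula α n} :
      IsPositiveHorn φ → IsPositiveHorn ψ → IsPositiveHorn (φ ⊓ ψ)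
  | ex {n} {φ : L.BoundedFormula α (n + 1)} : IsPositiveHorn φ → IsPositiveHorn φ.ex
  | all {n} {φ : L.BoundedFormula α (n + 1)} : IsPositiveHorn φ → IsPositiveHorn φ.all

/-- Primitive positive formulas: built from atomic formulas using `∧` and `∃`. -/
inductive IsPrimitivePositive {L : Language} {α : Type*} :
    ∀ {n : ℕ}, L.BoundedFormula α n → Prop
  | equal {n} (t₁ t₂ : L.Term (α ⊕ Fin n)) : IsPrimitivePositive (t₁.bdEqual t₂)
  | rel {n ℓ} (R : L.Relations ℓ) (ts : Fin ℓ → L.Term (α ⊕ Fin n)) :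
      IsPrimitivePositive (R.boundedFormula ts)
  | inf {n} {φ ψ : L.BoundedFormula α n} :
      IsPrimitivePositive φ → IsPrimitivePositive ψ → IsPrimitivePositive (φ ⊓ ψ)
  | ex {n} {φ : L.BoundedFormula α (n + 1)} : IsPrimitivePositive φ → IsPrimitivePositive φ.ex

/-- A periomorphism `h` preserves an `ℓ`-ary relation `R` over `A`. -/
def PreservesPer {L : Language} {A : Type w} [L.Structure A] {ℓ : ℕ}
    (h : periodicSubstructure L A →[L] A) (R : Set (Fin ℓ → A)) : Prop :=
  ∀ c : Fin ℓ → periodicSubstructure L A,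
    (∀ i : ℕ, (fun j => (c j : ℕ → A) i) ∈ R) → (fun j => h (c j)) ∈ R

/-- A finitary operation `g : A^k → A` preserves an `ℓ`-ary relation `R` over `A`. -/
def PreservesOp {A : Type*} {k ℓ : ℕ} (g : (Fin k → A) → A) (R : Set (Fin ℓ → A)) : Prop :=
  ∀ a : Fin k → Fin ℓ → A, (∀ i, a i ∈ R) → (fun j => g fun i => a i j) ∈ R


section auxlemmas

variable {L : Language} {A : Type w} [L.Structure A]

/-- Term realization in a pi structure is componentwise. -/
lemma term_realize_pi {ι : Type*} {M : Type*} {α : Type*} [L.Structure M]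
    (t : L.Term α) (v : α → (ι → M)) (i : ι) :
    t.realize v i = t.realize (fun a => v a i) := by
  induction t with
  | var => rfl
  | func f ts ih =>
    show funMap f (fun j => (ts j).realize v i) = funMap f fun j => (ts j).realize _
    exact congrArg (funMap f) (funext ih)

/-- Term realization in a substructure commutes with the inclusion. -/
lemma term_realize_sub {M : Type w} [L.Structure M] (S : L.Substructure M) {α : Type*}
    (t : L.Term α) (v : α → S) :
    ((t.realize v : S) : M) = t.realize (fun a => (v a : M)) := by
  have := HomClass.realize_term (L := L) S.subtype (t := t) (v := v)
  exact this.symm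

/-- A common period for a finite family of periodic sequences. -/
lemma common_period {ι : Type*} [Fintype ι] (c : ι → (periodicSubstructure L A)) :
    ∃ K : ℕ, 0 < K ∧ ∀ j, IsPeriodicWith (c j : ℕ → A) K := by
  choose k hk using fun j => (c j).2
  refine ⟨∏ j, k j, Finset.prod_pos fun j _ => (hk j).1, fun j =>
    isPeriodicWith_of_dvd (hk j) (Finset.prod_pos fun j _ => (hk j).1)
      (Finset.dvd_prod_of_mem k (Finset.mem_univ j))⟩

lemma sub_term_component {α : Type*} (t : L.Term α)
    (v : α → periodicSubstructure L A) (i : ℕ) :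
    ((t.realize v : periodicSubstructure L A) : ℕ → A) i = t.realize fun a => (v a : ℕ → A) i := by
  rw [term_realize_sub, term_realize_pi]

/-- If a positive Horn formula holds componentwise at every index, it holds in `A^per`. -/
lemma realize_per_of_componentwise {ℓ : ℕ} :
    ∀ {n : ℕ} {φ : L.BoundedFormula (Fin ℓ) n}, IsPositiveHorn φ →
    ∀ (v : Fin ℓ → periodicSubstructure L A) (xs : Fin n → periodicSubstructure L A),
    (∀ i : ℕ, φ.Realize (fun a => (v a : ℕ → A) i) (fun j => (xs j : ℕ → A) i)) →
    φ.Realize v xs := by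
  intro n φ hφ
  have elimeq : ∀ {m : ℕ} (v : Fin ℓ → periodicSubstructure L A)
      (xs : Fin m → periodicSubstructure L A) (i : ℕ),
      (fun a => ((Sum.elim v xs a : periodicSubstructure L A) : ℕ → A) i)
        = Sum.elim (fun a => (v a : ℕ → A) i) (fun j => (xs j : ℕ → A) i) := by
    intro m v xs i; funext a; cases a <;> rfl
  induction hφ with
  | equal t₁ t₂ =>
    intro v xs hv
    rw [BoundedFormula.realize_bdEqual]
    apply Subtype.ext
    funext i
    rw [sub_term_component, sub_term_component, elimeq]
    exact (BoundedFormula.realize_bdEqual _ _).1 (hv i)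
  | rel R ts =>
    intro v xs hv
    rw [BoundedFormula.realize_rel]
    show ∀ i : ℕ, RelMap R fun j =>
      (((ts j).realize (Sum.elim v xs) : periodicSubstructure L A) : ℕ → A) i
    intro i
    have key : (fun j =>
        (((ts j).realize (Sum.elim v xs) : periodicSubstructure L A) : ℕ → A) i)
        = fun j => (ts j).realize
            (Sum.elim (fun a => (v a : ℕ → A) i) fun j => (xs j : ℕ → A) i) := by
      funext j; rw [sub_term_component, elimeq]
    rw [key]
    exact BoundedFormula.realize_rel.1 (hv i)
  | inf h₁ h₂ ih₁ ih₂ =>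
    intro v xs hv
    rw [BoundedFormula.realize_inf]
    exact ⟨ih₁ v xs fun i => (BoundedFormula.realize_inf.1 (hv i)).1,
           ih₂ v xs fun i => (BoundedFormula.realize_inf.1 (hv i)).2⟩
  | @ex m ψ hψ ih =>
    intro v xs hv
    rw [BoundedFormula.realize_ex]
    obtain ⟨K, hK, hper⟩ := common_period (Sum.elim v xs)
    have hvper : ∀ a i, (v a : ℕ → A) i = (v a : ℕ → A) (i % K) :=
      fun a => (hper (Sum.inl a)).2
    have hxper : ∀ j i, (xs j : ℕ → A) i = (xs j : ℕ → A) (i % K) :=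
      fun j => (hper (Sum.inr j)).2
    choose w hw using fun i => (BoundedFormula.realize_ex.1 (hv i))
    set b : ℕ → A := fun i => w (i % K) with hb
    have hbmem : b ∈ periodicSubstructure L A :=
      ⟨K, hK, fun i => congrArg w (Nat.mod_mod_of_dvd i dvd_rfl).symm⟩
    refine ⟨⟨b, hbmem⟩, ih v (Fin.snoc xs ⟨b, hbmem⟩) fun i => ?_⟩
    have := hw (i % K)
    convert this using 2
    · exact hvper _ i
    · rename_i j
      induction j using Fin.lastCases with
      | last => simp [Fin.snoc_last, hb]
      | cast j => simp only [Fin.snoc_castSucc]; exact hxper j i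
  | @all m ψ hψ ih =>
    intro v xs hv
    rw [BoundedFormula.realize_all]
    intro c
    refine ih v (Fin.snoc xs c) fun i => ?_
    have := BoundedFormula.realize_all.1 (hv i) ((c : ℕ → A) i)
    convert this using 2
    rename_i j
    induction j using Fin.lastCases with
    | last => simp
    | cast j => simp

/-- Positive Horn formulas are preserved by surjective homomorphisms. -/
lemma realize_of_surjective {M N : Type w} [L.Structure M] [L.Structure N]
    (g : M →[L] N) (hg : Surjective g) {α : Type*} :
    ∀ {n : ℕ} {φ : L.BoundedFormula α n}, IsPositiveHorn φ →
    ∀ (v : α → M) (xs : Fin n → M), φ.Realize v xs → φ.Realize (g ∘ v) (g ∘ xs) := by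
  intro n φ hφ
  induction hφ with
  | equal t₁ t₂ =>
    intro v xs hr
    rw [BoundedFormula.realize_bdEqual] at hr ⊢
    rw [← Sum.comp_elim, HomClass.realize_term, HomClass.realize_term, hr]
  | rel R ts =>
    intro v xs hr
    rw [BoundedFormula.realize_rel] at hr ⊢
    have := g.map_rel R _ hr
    have key : (fun j => (ts j).realize (Sum.elim (⇑g ∘ v) (⇑g ∘ xs)))
        = ⇑g ∘ fun j => (ts j).realize (Sum.elim v xs) := by
      funext j
      rw [← Sum.comp_elim, HomClass.realize_term]
      rfl
    rw [key]
    exact this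
  | inf h₁ h₂ ih₁ ih₂ =>
    intro v xs hr
    rw [BoundedFormula.realize_inf] at hr ⊢
    exact ⟨ih₁ v xs hr.1, ih₂ v xs hr.2⟩
  | ex hψ ih =>
    intro v xs hr
    rw [BoundedFormula.realize_ex] at hr ⊢
    obtain ⟨a, ha⟩ := hr
    exact ⟨g a, by rw [← Fin.comp_snoc]; exact ih v (Fin.snoc xs a) ha⟩
  | all hψ ih =>
    intro v xs hr
    rw [BoundedFormula.realize_all] at hr ⊢
    intro c
    obtain ⟨a, rfl⟩ := hg c
    rw [← Fin.comp_snoc]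
    exact ih v (Fin.snoc xs a) (hr a)

end auxlemmas

/-- every positive Horn formula is preserved by all surjective
periomorphisms of `A`. -/
theorem stmt_13 {L : Language} {A : Type*} [L.Structure A] {ℓ : ℕ}
    (φ : L.Formula (Fin ℓ)) (hφ : IsPositiveHorn φ)
    (h : periodicSubstructure L A →[L] A) (hsurj : Surjective h)
    (v : Fin ℓ → periodicSubstructure L A)
    (hv : ∀ i : ℕ, φ.Realize (fun j => (v j : ℕ → A) i)) :
    φ.Realize (fun j => h (v j)) := by
  have h1 : BoundedFormula.Realize φ v (default : Fin 0 → periodicSubstructure L A) :=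
    realize_per_of_componentwise hφ v default fun i => by
      have := hv i
      unfold Formula.Realize at this
      convert this using 1
  have h2 := realize_of_surjective h hsurj hφ v default h1
  show BoundedFormula.Realize φ (fun j => h (v j)) default
  convert h2 using 1
  rfl
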